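/- Let p be a prime, n ≥ 1, let F = F(x_1, …, x_n, y_1, …, y_n) be the free group of rank 2n, let γ = [x_1,y_1][x_2,y_2]⋯[x_n,y_n], and let C = ⟨γ⟩. Then for every f ∈ F with f ∉ C and every nonzero integer m, the commutator [γ^m, f γ^m f⁻¹] is nontrivial. -/

import Mathlib

/-! Common definitions following the paper "Residual p properties of mapping class groups
and surface groups" by L. Paris. -/

/-- The commutator `[g,h] = g⁻¹h⁻¹gh`. -/
def commAB {G : Type*} [Group G] (g h : G) : G := g⁻¹ * h⁻¹ * g * h

/-- The commutator subgroup `[K,H]`, generated by all `[g,h]` with `g ∈ K`, `h ∈ H`. -/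
def commSub {G : Type*} [Group G] (K H : Subgroup G) : Subgroup G :=
  Subgroup.closure {x | ∃ g ∈ K, ∃ h ∈ H, x = commAB g h}

/-- The subgroup `[K,H]^p`, generated by all `[g,h]` (`g ∈ K`, `h ∈ H`) together with all
`h^p` (`h ∈ H`). -/
def pComm (p : ℕ) {G : Type*} [Group G] (K H : Subgroup G) : Subgroup G :=
  Subgroup.closure ({x | ∃ g ∈ K, ∃ h ∈ H, x = commAB g h} ∪ {x | ∃ h ∈ H, x = h ^ p})

/-- The lower `𝔽_p`-linear central filtration: `γ_1^p G = G` and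
`γ_{n+1}^p G = [G, γ_n^p G]^p` (with the harmless convention `γ_0^p G = G`). -/
def gammaP (p : ℕ) (G : Type*) [Group G] : ℕ → Subgroup G
  | 0 => ⊤
  | 1 => ⊤
  | n + 2 => pComm p ⊤ (gammaP p G (n + 1))

theorem pComm_top_normal (p : ℕ) {G : Type*} [Group G] {H : Subgroup G} (hH : H.Normal) :
    (pComm p ⊤ H).Normal := by
  constructor
  intro x hx g
  unfold pComm at hx ⊢
  induction hx using Subgroup.closure_induction with
  | mem y hy =>
    apply Subgroup.subset_closure
    rcases hy with ⟨a, -, h, hh, rfl⟩ | ⟨h, hh, rfl⟩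
    · exact Or.inl ⟨g * a * g⁻¹, trivial, g * h * g⁻¹, hH.conj_mem h hh g,
        by unfold commAB; group⟩
    · exact Or.inr ⟨g * h * g⁻¹, hH.conj_mem h hh g, (conj_pow).symm⟩
  | one => simpa using Subgroup.one_mem _
  | mul a b ha hb iha ihb =>
    have e : g * (a * b) * g⁻¹ = (g * a * g⁻¹) * (g * b * g⁻¹) := by group
    rw [e]; exact Subgroup.mul_mem _ iha ihb
  | inv a ha iha =>
    have e : g * a⁻¹ * g⁻¹ = (g * a * g⁻¹)⁻¹ := by group
    rw [e]; exact Subgroup.inv_mem _ iha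

instance gammaP_normal (p : ℕ) (G : Type*) [Group G] : ∀ n, (gammaP p G n).Normal
  | 0 => by unfold gammaP; infer_instance
  | 1 => by unfold gammaP; infer_instance
  | n + 2 => by unfold gammaP; exact pComm_top_normal p (gammaP_normal p G (n + 1))

/-- `G` is residually `p`: every nontrivial element survives in some finite `p`-group
quotient. -/
def IsResiduallyP (p : ℕ) (G : Type*) [Group G] : Prop :=
  ∀ g : G, g ≠ 1 → ∃ (P : Type) (_ : Group P) (_ : Finite P) (φ : G →* P),
    IsPGroup p P ∧ Function.Surjective φ ∧ φ g ≠ 1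

/-- `G` is conjugacy `p`-separable. -/
def IsConjPSeparable (p : ℕ) (G : Type*) [Group G] : Prop :=
  ∀ g h : G, IsConj g h ∨ ∃ (P : Type) (_ : Group P) (_ : Finite P) (φ : G →* P),
    IsPGroup p P ∧ Function.Surjective φ ∧ ¬ IsConj (φ g) (φ h)

/-- Property A: every automorphism of `G` preserving every conjugacy class is inner. -/
def PropertyA (G : Type*) [Group G] : Prop :=
  ∀ α : MulAut G, (∀ g : G, IsConj g (α g)) → α ∈ (MulAut.conj : G →* MulAut G).range

/-- `A_n`: the kernel of the natural homomorphism `Aut(G) → Aut(G/γ_{n+1}^p G)`, i.e. the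
automorphisms acting trivially modulo `γ_{n+1}^p G`. -/
def An (p : ℕ) (G : Type*) [Group G] (n : ℕ) : Subgroup (MulAut G) where
  carrier := {α | ∀ g : G, g⁻¹ * α g ∈ gammaP p G (n + 1)}
  one_mem' := by intro g; simpa using Subgroup.one_mem _
  mul_mem' := by
    intro a b ha hb g
    have e : g⁻¹ * (a * b) g = (g⁻¹ * b g) * ((b g)⁻¹ * a (b g)) := by
      rw [MulAut.mul_apply]; group
    rw [e]; exact Subgroup.mul_mem _ (hb g) (ha (b g))
  inv_mem' := by
    intro a ha g
    have h := ha ((a⁻¹ : MulAut G) g)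
    rw [MulAut.apply_inv_self] at h
    have e : g⁻¹ * (a⁻¹ : MulAut G) g = (((a⁻¹ : MulAut G) g)⁻¹ * g)⁻¹ := by group
    rw [e]; exact Subgroup.inv_mem _ h

theorem mem_An {p : ℕ} {G : Type*} [Group G] {n : ℕ} {α : MulAut G} :
    α ∈ An p G n ↔ ∀ g : G, g⁻¹ * α g ∈ gammaP p G (n + 1) := Iff.rfl

/-- `I_p(G)`: the kernel of the natural homomorphism `Aut(G) → Aut(G/γ_2^p G)`. -/
abbrev Ip (p : ℕ) (G : Type*) [Group G] : Subgroup (MulAut G) := An p G 1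

/-- `Inn(G)`, viewed as a subgroup of `I_p(G)`. -/
def InnSub (p : ℕ) (G : Type*) [Group G] : Subgroup (Ip p G) :=
  Subgroup.comap (Ip p G).subtype (MulAut.conj : G →* MulAut G).range

instance innSub_normal (p : ℕ) (G : Type*) [Group G] : (InnSub p G).Normal := by
  constructor
  rintro n hn g
  obtain ⟨x, hx⟩ := hn
  refine ⟨(g : MulAut G) x, ?_⟩
  have hx' : MulAut.conj x = (n : MulAut G) := hx
  show MulAut.conj ((g : MulAut G) x) = ((g * n * g⁻¹ : Ip p G) : MulAut G)
  ext y
  simp only [Subgroup.coe_mul, Subgroup.coe_inv, MulAut.mul_apply, MulAut.conj_apply, ← hx',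
    map_mul, map_inv, MulAut.apply_inv_self]

/-- The surface relator `[x_1,y_1][x_2,y_2]⋯[x_ρ,y_ρ]` in the free group on
`x_1, …, x_ρ, y_1, …, y_ρ`. -/
def surfaceRel (ρ : ℕ) : FreeGroup (Fin ρ ⊕ Fin ρ) :=
  (List.ofFn fun i : Fin ρ =>
    commAB (FreeGroup.of (Sum.inl i)) (FreeGroup.of (Sum.inr i))).prod

/-- The fundamental group of the closed oriented surface of genus `ρ`, given by the
presentation `⟨x_1, …, x_ρ, y_1, …, y_ρ | [x_1,y_1]⋯[x_ρ,y_ρ] = 1⟩`. -/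
abbrev SurfaceGroup (ρ : ℕ) : Type :=
  PresentedGroup ({surfaceRel ρ} : Set (FreeGroup (Fin ρ ⊕ Fin ρ)))
set_option linter.unusedSectionVars false

namespace ClaimAux

open FreeGroup List

variable {α : Type*} [DecidableEq α]

def Cancels (p q : α × Bool) : Prop := p.1 = q.1 ∧ p.2 = !q.2

lemma cancels_symm {p q : α × Bool} (h : Cancels p q) : Cancels q p :=
  ⟨h.1.symm, by rw [h.2, Bool.not_not]⟩

def IsRed (L : List (α × Bool)) : Prop := L.Chain' (fun p q => ¬ Cancels p q)

lemma IsRed.nil : IsRed ([] : List (α × Bool)) := List.isChain_nil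

lemma reduce_eq_self {L : List (α × Bool)} (h : IsRed L) : FreeGroup.reduce L = L := by
  induction L with
  | nil => rfl
  | cons x L ih =>
    have hL : IsRed L := h.tail
    rw [FreeGroup.reduce.cons, ih hL]
    cases L with
    | nil => rfl
    | cons hd tl =>
      have hnc : ¬ Cancels x hd := List.isChain_cons_cons.1 h |>.1
      simp only [Cancels] at hnc
      show (if x.1 = hd.1 ∧ x.2 = !hd.2 then _ else _) = _
      rw [if_neg hnc]

lemma isRed_reduce (L : List (α × Bool)) : IsRed (FreeGroup.reduce L) := by
  induction L with
  | nil => exact IsRed.nil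
  | cons x L ih =>
    rw [FreeGroup.reduce.cons]
    rcases hR : FreeGroup.reduce L with _ | ⟨hd, tl⟩
    · simp [IsRed, List.Chain']
    · rw [hR] at ih
      show IsRed (if x.1 = hd.1 ∧ x.2 = !hd.2 then _ else _)
      by_cases hc : x.1 = hd.1 ∧ x.2 = !hd.2
      · rw [if_pos hc]; exact ih.tail
      · simp only [if_neg hc]
        exact List.isChain_cons_cons.2 ⟨fun h => hc ⟨h.1, h.2⟩, ih⟩

lemma isRed_toWord (x : FreeGroup α) : IsRed x.toWord := by
  rw [← FreeGroup.reduce_toWord]; exact isRed_reduce _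

lemma toWord_mk_isRed {L : List (α × Bool)} (h : IsRed L) : (FreeGroup.mk L).toWord = L := by
  rw [FreeGroup.toWord_mk, reduce_eq_self h]

omit [DecidableEq α] in
lemma invRev_cons (a : α × Bool) (u : List (α × Bool)) :
    FreeGroup.invRev (a :: u) = FreeGroup.invRev u ++ [(a.1, !a.2)] := by
  simp [FreeGroup.invRev]

/-- Cyclic decomposition of a reduced word. -/
lemma cdec : ∀ (N : ℕ) (L : List (α × Bool)), L.length ≤ N → IsRed L → L ≠ [] →
    ∃ u v : List (α × Bool), L = u ++ (v ++ FreeGroup.invRev u) ∧ v ≠ [] ∧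
      ∀ a b : α × Bool, a ∈ v.head? → b ∈ v.getLast? → ¬ Cancels b a := by
  intro N
  induction N with
  | zero =>
    intro L hL _ hne
    exact absurd (List.length_eq_zero_iff.1 (Nat.le_zero.1 hL)) hne
  | succ N ih =>
    intro L hlen hred hne
    by_cases hnc : Cancels (L.getLast hne) (L.head hne)
    · -- strip first and last letters
      obtain ⟨a, T, rfl⟩ : ∃ a T, L = a :: T := ⟨L.head hne, L.tail, (List.cons_head_tail hne).symm⟩
      have hT : T ≠ [] := by
        rintro rfl
        simp only [List.getLast_singleton, List.head_cons] at hnc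
        exact absurd hnc.2 (by simp)
      obtain ⟨M, b, rfl⟩ : ∃ M b, T = M ++ [b] :=
        ⟨T.dropLast, T.getLast hT, (List.dropLast_concat_getLast hT).symm⟩
      have hb : (a :: (M ++ [b])).getLast hne = b := by
        rw [List.getLast_cons (by simp : M ++ [b] ≠ [])]
        exact List.getLast_concat
      rw [hb, List.head_cons] at hnc
      -- hnc : Cancels b a
      have hbval : b = (a.1, !a.2) := Prod.ext hnc.1 hnc.2
      have hredMb : IsRed (M ++ [b]) := hred.tail
      have hredM : IsRed M := (List.isChain_append.1 hredMb).1
      rcases eq_or_ne M [] with rfl | hM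
      · -- L = [a, b] reduced, but b cancels a
        exfalso
        have : ¬ Cancels a b := (List.isChain_cons_cons.1 hred).1
        exact this (cancels_symm hnc)
      · obtain ⟨u, v, hMeq, hv, hnc'⟩ := ih M (by simp at hlen ⊢; omega) hredM hM
        refine ⟨a :: u, v, ?_, hv, hnc'⟩
        rw [invRev_cons, hMeq, ← hbval]
        simp
    · exact ⟨[], L, by simp [FreeGroup.invRev], hne, fun x y hx hy => by
        rw [List.head?_eq_head hne] at hx
        rw [List.getLast?_eq_getLast hne] at hy
        rw [Option.mem_some_iff] at hx hy
        subst hx hy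
        exact hnc⟩

lemma flatten_rep_facts {v : List (α × Bool)} (hv : v ≠ []) (hvred : IsRed v)
    (hnc : ∀ a b : α × Bool, a ∈ v.head? → b ∈ v.getLast? → ¬ Cancels b a) :
    ∀ k : ℕ, 1 ≤ k → IsRed (List.replicate k v).flatten ∧
      (List.replicate k v).flatten.head? = v.head? ∧
      (List.replicate k v).flatten.getLast? = v.getLast? := by
  intro k hk
  induction k with
  | zero => omega
  | succ k ihk =>
    rcases Nat.eq_or_lt_of_le hk with h1 | h2
    · have hk0 : k = 0 := by omega
      subst hk0
      have hrep : (List.replicate 1 v).flatten = v := by simp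
      rw [hrep]
      exact ⟨hvred, rfl, rfl⟩
    · have hk1 : 1 ≤ k := by omega
      obtain ⟨ih1, ih2, ih3⟩ := ihk hk1
      have hFne : (List.replicate k v).flatten ≠ [] := by
        intro h
        rw [h] at ih2
        rw [List.head?_eq_head hv] at ih2
        exact absurd ih2 (by simp)
      have hstep : (List.replicate (k+1) v).flatten = v ++ (List.replicate k v).flatten := by
        rw [List.replicate_succ, List.flatten_cons]
      refine ⟨?_, ?_, ?_⟩
      · rw [hstep]
        refine List.isChain_append.2 ⟨hvred, ih1, fun b hb a ha => ?_⟩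
        rw [ih2] at ha
        exact hnc a b ha hb
      · rw [hstep, List.head?_append_of_ne_nil _ hv]
      · rw [hstep, List.getLast?_append_of_ne_nil _ hFne]
        exact ih3

/-- Powers of a nontrivial element have reduced words of the shape
`u ++ v^k ++ u⁻¹`. -/
lemma pow_word (x : FreeGroup α) (hx : x ≠ 1) :
    ∃ u v : List (α × Bool), v ≠ [] ∧
      ∀ k : ℕ, 1 ≤ k →
        (x ^ k).toWord = u ++ ((List.replicate k v).flatten ++ FreeGroup.invRev u) := by
  have hw : x.toWord ≠ [] := fun h => hx (FreeGroup.toWord_eq_nil_iff.1 h)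
  obtain ⟨u, v, hL, hv, hnc⟩ := cdec x.toWord.length x.toWord le_rfl (isRed_toWord x) hw
  have hred : IsRed (u ++ (v ++ FreeGroup.invRev u)) := hL ▸ isRed_toWord x
  obtain ⟨hu, hred2, hj1⟩ := List.isChain_append.1 hred
  obtain ⟨hvred, hinvred, hj2⟩ := List.isChain_append.1 hred2
  refine ⟨u, v, hv, ?_⟩
  intro k hk
  obtain ⟨hF1, hF2, hF3⟩ := flatten_rep_facts hv hvred hnc k hk
  have hFne : (List.replicate k v).flatten ≠ [] := by
    intro h
    rw [h] at hF2
    rw [List.head?_eq_head hv] at hF2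
    exact absurd hF2 (by simp)
  set F := (List.replicate k v).flatten with hFdef
  -- the word u ++ (F ++ invRev u) is reduced
  have hredk : IsRed (u ++ (F ++ FreeGroup.invRev u)) := by
    refine List.isChain_append.2 ⟨hu, ?_, ?_⟩
    · refine List.isChain_append.2 ⟨hF1, hinvred, fun b hb a ha => ?_⟩
      rw [hF3] at hb
      exact hj2 b hb a ha
    · intro b hb a ha
      rw [List.head?_append_of_ne_nil _ hFne, hF2] at ha
      apply hj1 b hb
      rw [List.head?_append_of_ne_nil _ hv]
      exact ha
  -- mk equality
  have hxeq : x = FreeGroup.mk u * FreeGroup.mk v * (FreeGroup.mk u)⁻¹ := by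
    conv_lhs => rw [← FreeGroup.mk_toWord (x := x), hL]
    rw [← FreeGroup.mul_mk, ← FreeGroup.mul_mk, FreeGroup.inv_mk, mul_assoc]
  have hsplit : FreeGroup.mk (u ++ (F ++ FreeGroup.invRev u)) =
      FreeGroup.mk u * FreeGroup.mk F * (FreeGroup.mk u)⁻¹ := by
    rw [← FreeGroup.mul_mk, ← FreeGroup.mul_mk, FreeGroup.inv_mk, mul_assoc]
  have hxk : x ^ k = FreeGroup.mk (u ++ (F ++ FreeGroup.invRev u)) := by
    rw [hsplit, hxeq, conj_pow, FreeGroup.pow_mk]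
  rw [hxk, toWord_mk_isRed hredk]

lemma norm_pow_formula (x : FreeGroup α) (hx : x ≠ 1) :
    ∃ a b : ℕ, 1 ≤ b ∧ ∀ k : ℕ, 1 ≤ k → FreeGroup.norm (x ^ k) = a + k * b := by
  obtain ⟨u, v, hv, hw⟩ := pow_word x hx
  refine ⟨2 * u.length, v.length, by
    cases v with
    | nil => exact absurd rfl hv
    | cons a l => simp, ?_⟩
  intro k hk
  have : FreeGroup.norm (x ^ k) = (x ^ k).toWord.length := rfl
  rw [this, hw k hk]
  simp [FreeGroup.invRev_length, List.length_flatten, List.map_replicate, List.sum_replicate,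
    smul_eq_mul]
  ring

lemma norm_eq_toWord_length (x : FreeGroup α) : FreeGroup.norm x = x.toWord.length := rfl

lemma norm_pos (x : FreeGroup α) (hx : x ≠ 1) : 1 ≤ FreeGroup.norm x := by
  rcases Nat.eq_zero_or_pos (FreeGroup.norm x) with h | h
  · exact absurd (FreeGroup.norm_eq_zero.1 h) hx
  · exact h

/-- Norm facts about integer powers. -/
lemma norm_zpow_facts (x : FreeGroup α) (hx : x ≠ 1) (m : ℤ) (hm : m ≠ 0) :
    m.natAbs ≤ FreeGroup.norm (x ^ m) ∧ FreeGroup.norm x ≤ FreeGroup.norm (x ^ m) ∧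
      (FreeGroup.norm (x ^ m) ≤ FreeGroup.norm x → m = 1 ∨ m = -1) := by
  obtain ⟨a, b, hb, hf⟩ := norm_pow_formula x hx
  have h1 := hf 1 le_rfl
  rw [pow_one] at h1
  rcases m with k | k
  · have hk : 1 ≤ k := by
      rcases Nat.eq_zero_or_pos k with h | h
      · exact absurd (by simp [h]) hm
      · exact h
    have : x ^ (Int.ofNat k) = x ^ k := zpow_natCast x k
    rw [this, hf k hk]
    refine ⟨by simp; nlinarith, by nlinarith, fun h => ?_⟩
    left
    have : k = 1 := by nlinarith
    simp [this]
  · have : x ^ (Int.negSucc k) = (x ^ (k+1))⁻¹ := zpow_negSucc x k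
    rw [this, FreeGroup.norm_inv_eq, hf (k+1) (by omega)]
    refine ⟨by simp; nlinarith, by nlinarith, fun h => ?_⟩
    right
    have : k + 1 = 1 := by nlinarith
    simp [Int.negSucc_eq]
    omega

/-- Free groups are torsion-free. -/
lemma zpow_ne_one (x : FreeGroup α) (hx : x ≠ 1) (m : ℤ) (hm : m ≠ 0) : x ^ m ≠ 1 := by
  intro h
  have h1 := (norm_zpow_facts x hx m hm).1
  rw [h, FreeGroup.norm_one] at h1
  omega

section GroupTheory

lemma toWord_of_mul_of {β : Type*} [DecidableEq β] (a b : β) :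
    (FreeGroup.of a * FreeGroup.of b).toWord = [(a, true), (b, true)] := by
  show (FreeGroup.mk [(a, true)] * FreeGroup.mk [(b, true)]).toWord = _
  rw [FreeGroup.mul_mk]
  refine toWord_mk_isRed ?_
  refine List.isChain_cons_cons.2 ⟨?_, List.isChain_singleton _⟩
  rintro ⟨-, h2⟩
  simp at h2

lemma gens_eq_of_comm {β : Type*} (h : ∀ x y : FreeGroup β, Commute x y) (a b : β) : a = b := by
  classical
  have hc : FreeGroup.of a * FreeGroup.of b = FreeGroup.of b * FreeGroup.of a := h _ _
  have h2 := congrArg FreeGroup.toWord hc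
  rw [toWord_of_mul_of, toWord_of_mul_of] at h2
  simp at h2
  exact h2.1

lemma exists_gen_of_subsingleton_gens {β : Type*} (hss : ∀ a b : β, a = b) :
    ∃ c : FreeGroup β, ∀ x : FreeGroup β, x ∈ Subgroup.zpowers c := by
  rcases isEmpty_or_nonempty β with he | hne
  · refine ⟨1, fun x => ?_⟩
    suffices h : x = 1 by rw [h]; exact Subgroup.one_mem _
    induction x using FreeGroup.induction_on with
    | C1 => rfl
    | of a => exact he.elim a
    | inv_of a _ => exact he.elim a
    | mul x y hx hy => rw [hx, hy, one_mul]
  · obtain ⟨s⟩ := hne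
    refine ⟨FreeGroup.of s, fun x => ?_⟩
    induction x using FreeGroup.induction_on with
    | C1 => exact Subgroup.one_mem _
    | of a =>
      show FreeGroup.of a ∈ _
      rw [hss a s]
      exact Subgroup.mem_zpowers _
    | inv_of a ha => exact Subgroup.inv_mem _ ha
    | mul x y hx hy => exact Subgroup.mul_mem _ hx hy

lemma cyclic_of_comm {G : Type*} [Group G] [IsFreeGroup G] (h : ∀ x y : G, Commute x y) :
    ∃ c : G, ∀ x : G, x ∈ Subgroup.zpowers c := by
  classical
  set e := IsFreeGroup.toFreeGroup (G := G) with he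
  have hcomm : ∀ x y : FreeGroup (IsFreeGroup.Generators G), Commute x y := by
    intro x y
    have h1 : Commute (e (e.symm x)) (e (e.symm y)) := (h (e.symm x) (e.symm y)).map e
    simpa using h1
  obtain ⟨c, hc⟩ := exists_gen_of_subsingleton_gens (gens_eq_of_comm hcomm)
  refine ⟨e.symm c, fun x => ?_⟩
  obtain ⟨k, hk⟩ := Subgroup.mem_zpowers_iff.1 (hc (e x))
  refine Subgroup.mem_zpowers_iff.2 ⟨k, ?_⟩
  have h2 := congrArg e.symm hk
  rw [map_zpow] at h2
  simpa using h2

lemma closure_pair_comm {β : Type*} {x y : FreeGroup β} (h : Commute x y) :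
    ∀ z ∈ Subgroup.closure ({x, y} : Set (FreeGroup β)),
      ∀ w ∈ Subgroup.closure ({x, y} : Set (FreeGroup β)), Commute z w := by
  have base : ∀ w ∈ Subgroup.closure ({x, y} : Set (FreeGroup β)), Commute x w ∧ Commute y w := by
    intro w hw
    induction hw using Subgroup.closure_induction with
    | mem g hg =>
      rcases hg with rfl | hg
      · exact ⟨Commute.refl _, h.symm⟩
      · rw [Set.mem_singleton_iff] at hg; subst hg
        exact ⟨h, Commute.refl _⟩
    | one => exact ⟨Commute.one_right _, Commute.one_right _⟩
    | mul a b ha hb iha ihb => exact ⟨iha.1.mul_right ihb.1, iha.2.mul_right ihb.2⟩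
    | inv a ha iha => exact ⟨iha.1.inv_right, iha.2.inv_right⟩
  intro z hz
  induction hz using Subgroup.closure_induction with
  | mem g hg =>
    intro w hw
    rcases hg with rfl | hg
    · exact (base w hw).1
    · rw [Set.mem_singleton_iff] at hg; subst hg
      exact (base w hw).2
  | one => exact fun w hw => Commute.one_left _
  | mul a b ha hb iha ihb => exact fun w hw => (iha w hw).mul_left (ihb w hw)
  | inv a ha iha => exact fun w hw => (iha w hw).inv_left

lemma common_root {β : Type*} {x y : FreeGroup β} (h : Commute x y) :
    ∃ c : FreeGroup β, x ∈ Subgroup.zpowers c ∧ y ∈ Subgroup.zpowers c := by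
  set H := Subgroup.closure ({x, y} : Set (FreeGroup β)) with hH
  have hxH : x ∈ H := Subgroup.subset_closure (by simp)
  have hyH : y ∈ H := Subgroup.subset_closure (by simp)
  have hcomm : ∀ a b : H, Commute a b := by
    rintro ⟨a, ha⟩ ⟨b, hb⟩
    have := closure_pair_comm h a ha b hb
    exact Subtype.ext this
  obtain ⟨c, hc⟩ := cyclic_of_comm hcomm
  refine ⟨(c : FreeGroup β), ?_, ?_⟩
  · obtain ⟨k, hk⟩ := Subgroup.mem_zpowers_iff.1 (hc ⟨x, hxH⟩)
    refine Subgroup.mem_zpowers_iff.2 ⟨k, ?_⟩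
    have := congrArg (Subtype.val) hk
    simpa using this
  · obtain ⟨k, hk⟩ := Subgroup.mem_zpowers_iff.1 (hc ⟨y, hyH⟩)
    refine Subgroup.mem_zpowers_iff.2 ⟨k, ?_⟩
    have := congrArg (Subtype.val) hk
    simpa using this

lemma comm_of_central_freeGroup {β : Type*} {z : FreeGroup β} (hz : z ≠ 1)
    (hc : ∀ g : FreeGroup β, Commute z g) (a b : FreeGroup β) : Commute a b := by
  classical
  have hgen : ∀ s : β, z ∈ Subgroup.zpowers (FreeGroup.of s) := by
    intro s
    obtain ⟨c, hzc, hsc⟩ := common_root (hc (FreeGroup.of s))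
    obtain ⟨q, hq⟩ := Subgroup.mem_zpowers_iff.1 hsc
    set π : FreeGroup β →* Multiplicative ℤ :=
      FreeGroup.lift (fun i => Multiplicative.ofAdd (if i = s then (1:ℤ) else 0)) with hπ
    have hπs : π (FreeGroup.of s) = Multiplicative.ofAdd 1 := by
      rw [hπ, FreeGroup.lift_apply_of, if_pos rfl]
    have hq' := congrArg π hq
    rw [map_zpow, hπs] at hq'
    have hA : q * (Multiplicative.toAdd (π c)) = 1 := by
      have h2 := congrArg Multiplicative.toAdd hq'
      simpa [toAdd_zpow, smul_eq_mul] using h2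
    have hq1 : q = 1 ∨ q = -1 := Int.isUnit_iff.1 (IsUnit.of_mul_eq_one _ hA)
    obtain ⟨p, hp⟩ := Subgroup.mem_zpowers_iff.1 hzc
    rcases hq1 with rfl | rfl
    · rw [zpow_one] at hq
      rw [hq] at hp
      exact Subgroup.mem_zpowers_iff.2 ⟨p, hp⟩
    · have hcval : c = (FreeGroup.of s)⁻¹ := by
        rw [← hq]; simp
      rw [hcval] at hp
      refine Subgroup.mem_zpowers_iff.2 ⟨-p, ?_⟩
      rw [← hp]
      simp
  have hss : ∀ s t : β, s = t := by
    intro s t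
    by_contra hst
    obtain ⟨ps, hps⟩ := Subgroup.mem_zpowers_iff.1 (hgen s)
    set π : FreeGroup β →* Multiplicative ℤ :=
      FreeGroup.lift (fun i => Multiplicative.ofAdd (if i = t then (1:ℤ) else 0)) with hπ
    have hπs : π (FreeGroup.of s) = 1 := by
      rw [hπ, FreeGroup.lift_apply_of, if_neg hst]
      rfl
    have h1 := congrArg π hps
    rw [map_zpow, hπs, one_zpow] at h1
    -- π z = 1
    obtain ⟨pt, hpt⟩ := Subgroup.mem_zpowers_iff.1 (hgen t)
    have hπt : π (FreeGroup.of t) = Multiplicative.ofAdd 1 := by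
      rw [hπ, FreeGroup.lift_apply_of, if_pos rfl]
    have h2 := congrArg π hpt
    rw [map_zpow, hπt, ← h1] at h2
    have hpt0 : pt = 0 := by
      have h3 := congrArg Multiplicative.toAdd h2
      simpa [toAdd_zpow, smul_eq_mul] using h3
    rw [hpt0] at hpt
    rw [zpow_zero] at hpt
    exact hz hpt.symm
  obtain ⟨c, hc'⟩ := exists_gen_of_subsingleton_gens hss
  obtain ⟨i, hi⟩ := Subgroup.mem_zpowers_iff.1 (hc' a)
  obtain ⟨j, hj⟩ := Subgroup.mem_zpowers_iff.1 (hc' b)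
  rw [← hi, ← hj]
  exact Commute.zpow_zpow (Commute.refl c) i j

lemma comm_of_central_isFree {G : Type*} [Group G] [IsFreeGroup G] {z : G} (hz : z ≠ 1)
    (hc : ∀ g : G, Commute z g) (a b : G) : Commute a b := by
  set e := IsFreeGroup.toFreeGroup (G := G) with he
  have h1 : e z ≠ 1 := by
    intro h
    apply hz
    have := congrArg e.symm h
    simpa using this
  have h2 : ∀ g : FreeGroup (IsFreeGroup.Generators G), Commute (e z) g := by
    intro g
    have h3 : Commute (e z) (e (e.symm g)) := (hc (e.symm g)).map e
    simpa using h3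
  have h4 : Commute (e a) (e b) := comm_of_central_freeGroup h1 h2 (e a) (e b)
  have h5 : Commute (e.symm (e a)) (e.symm (e b)) := h4.map e.symm
  simpa using h5

lemma commute_of_common_central {β : Type*} {a b z : FreeGroup β} (hz : z ≠ 1)
    (hmem : z ∈ Subgroup.closure ({a, b} : Set (FreeGroup β)))
    (hza : Commute z a) (hzb : Commute z b) : Commute a b := by
  set M := Subgroup.closure ({a, b} : Set (FreeGroup β)) with hM
  have haM : a ∈ M := Subgroup.subset_closure (by simp)
  have hbM : b ∈ M := Subgroup.subset_closure (by simp)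
  have hzc : ∀ w ∈ M, Commute z w := by
    intro w hw
    induction hw using Subgroup.closure_induction with
    | mem g hg =>
      rcases hg with rfl | hg
      · exact hza
      · rw [Set.mem_singleton_iff] at hg; subst hg; exact hzb
    | one => exact Commute.one_right _
    | mul u v hu hv ihu ihv => exact ihu.mul_right ihv
    | inv u hu ihu => exact ihu.inv_right
  have hcen : ∀ g : M, Commute (⟨z, hmem⟩ : M) g := by
    rintro ⟨g, hg⟩
    exact Subtype.ext (hzc g hg)
  have hzne : (⟨z, hmem⟩ : M) ≠ 1 := by
    intro h
    exact hz (congrArg Subtype.val h)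
  have h4 := comm_of_central_isFree hzne hcen ⟨a, haM⟩ ⟨b, hbM⟩
  exact Subtype.ext_iff.1 h4

/-- If `x` commutes with a nonzero power of `y ≠ 1`, it commutes with `y`. -/
lemma commute_of_commute_zpow {β : Type*} [DecidableEq β] {x y : FreeGroup β} {s : ℤ}
    (hy : y ≠ 1) (hs : s ≠ 0) (h : Commute x (y ^ s)) : Commute x y := by
  have hzne : y ^ s ≠ 1 := zpow_ne_one y hy s hs
  have hmem : y ^ s ∈ Subgroup.closure ({x, y} : Set (FreeGroup β)) :=
    Subgroup.zpow_mem _ (Subgroup.subset_closure (by simp)) s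
  exact commute_of_common_central hzne hmem h.symm ((Commute.refl y).zpow_left s)

end GroupTheory

section MaxRoot

variable {β : Type*} [DecidableEq β]

lemma ne_one_of_zpowers {c : FreeGroup β} {a : FreeGroup β} (ha : a ≠ 1)
    (h : a ∈ Subgroup.zpowers c) : c ≠ 1 := by
  rintro rfl
  obtain ⟨k, hk⟩ := Subgroup.mem_zpowers_iff.1 h
  rw [one_zpow] at hk
  exact ha hk.symm

lemma mem_zpowers_of_mem_zpowers_inv {c d : FreeGroup β} (h : d ∈ Subgroup.zpowers c⁻¹) :
    d ∈ Subgroup.zpowers c := by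
  obtain ⟨k, hk⟩ := Subgroup.mem_zpowers_iff.1 h
  refine Subgroup.mem_zpowers_iff.2 ⟨-k, ?_⟩
  rw [← hk]
  simp

/-- Existence of a "maximal root" `c` of `a`: the centralizer of `a` is contained in
`zpowers c`. -/
lemma exists_maxroot {a : FreeGroup β} (ha : a ≠ 1) :
    ∃ c : FreeGroup β, c ≠ 1 ∧ a ∈ Subgroup.zpowers c ∧
      ∀ x, Commute x a → x ∈ Subgroup.zpowers c := by
  classical
  set P : ℕ → Prop := fun N => ∃ x : FreeGroup β, x ≠ 1 ∧ a ∈ Subgroup.zpowers x ∧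
    FreeGroup.norm x = N with hPdef
  have hP : ∃ N, P N := ⟨FreeGroup.norm a, a, ha, Subgroup.mem_zpowers a, rfl⟩
  obtain ⟨c, hc1, hc2, hc3⟩ := Nat.find_spec hP
  have hmin : ∀ x : FreeGroup β, x ≠ 1 → a ∈ Subgroup.zpowers x →
      FreeGroup.norm c ≤ FreeGroup.norm x := by
    intro x h1 h2
    rw [hc3]
    exact Nat.find_min' hP ⟨x, h1, h2, rfl⟩
  refine ⟨c, hc1, hc2, ?_⟩
  intro x hxa
  rcases eq_or_ne x 1 with rfl | hx1
  · exact Subgroup.one_mem _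
  obtain ⟨d, hxd, had⟩ := common_root hxa
  have hd1 : d ≠ 1 := ne_one_of_zpowers ha had
  obtain ⟨q, hq⟩ := Subgroup.mem_zpowers_iff.1 had
  have hq0 : q ≠ 0 := by
    rintro rfl
    rw [zpow_zero] at hq
    exact ha hq.symm
  obtain ⟨i, hi⟩ := Subgroup.mem_zpowers_iff.1 hc2
  have hca : Commute c a := by rw [← hi]; exact (Commute.refl c).zpow_right i
  have hcd : Commute c d := commute_of_commute_zpow hd1 hq0 (by rw [hq]; exact hca)
  obtain ⟨e, hce, hde⟩ := common_root hcd
  have he1 : e ≠ 1 := ne_one_of_zpowers hc1 hce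
  obtain ⟨al, hal⟩ := Subgroup.mem_zpowers_iff.1 hce
  have hal0 : al ≠ 0 := by
    rintro rfl
    rw [zpow_zero] at hal
    exact hc1 hal.symm
  have haE : a ∈ Subgroup.zpowers e := by
    refine Subgroup.mem_zpowers_iff.2 ⟨al * i, ?_⟩
    rw [zpow_mul, hal, hi]
  have h1 : FreeGroup.norm c ≤ FreeGroup.norm e := hmin e he1 haE
  have h2 : FreeGroup.norm (e ^ al) ≤ FreeGroup.norm e := by
    rw [hal]; exact h1
  rcases (norm_zpow_facts e he1 al hal0).2.2 h2 with rfl | rfl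
  · rw [zpow_one] at hal
    subst hal
    exact (Subgroup.zpowers_le.2 hde) hxd
  · have hec : e = c⁻¹ := by
      rw [← hal]; simp
    rw [hec] at hde
    exact (Subgroup.zpowers_le.2 (mem_zpowers_of_mem_zpowers_inv hde)) hxd

lemma sq_le_two_pow : ∀ k : ℕ, 4 ≤ k → k * k ≤ 2 ^ k := by
  intro k hk
  induction k, hk using Nat.le_induction with
  | base => norm_num
  | succ k hk4 ih =>
    have h1 : 2 * k + 1 ≤ k * k := by nlinarith
    calc (k+1) * (k+1) = k * k + (2 * k + 1) := by ring
    _ ≤ 2 ^ k + 2 ^ k := by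
        have := ih
        omega
    _ = 2 ^ (k + 1) := by ring

lemma norm_pow_le (f : FreeGroup β) (k : ℕ) : FreeGroup.norm (f ^ k) ≤ k * FreeGroup.norm f := by
  induction k with
  | zero => simp [FreeGroup.norm_one]
  | succ k ih =>
    rw [pow_succ]
    calc FreeGroup.norm (f ^ k * f) ≤ FreeGroup.norm (f ^ k) + FreeGroup.norm f :=
          FreeGroup.norm_mul_le _ _
    _ ≤ k * FreeGroup.norm f + FreeGroup.norm f := by omega
    _ = (k + 1) * FreeGroup.norm f := by ring

/-- A Baumslag–Solitar type relation `f c f⁻¹ = c ^ r` in a free group forces `|r| ≤ 1`. -/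
lemma bs_relation {c f : FreeGroup β} {r : ℤ} (hc : c ≠ 1)
    (hconj : f * c * f⁻¹ = c ^ r) : r.natAbs ≤ 1 := by
  by_contra hr
  push_neg at hr
  have hr0 : r ≠ 0 := by
    intro h; rw [h] at hr; simp at hr
  have hit : ∀ k : ℕ, f ^ k * c * (f ^ k)⁻¹ = c ^ (r ^ k) := by
    intro k
    induction k with
    | zero => simp
    | succ k ih =>
      have h1 : f ^ (k+1) * c * (f ^ (k+1))⁻¹ = f * (f ^ k * c * (f ^ k)⁻¹) * f⁻¹ := by
        rw [pow_succ']
        group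
      rw [h1, ih, ← conj_zpow, hconj, ← zpow_mul, ← pow_succ']
  set F := FreeGroup.norm f with hF
  set C := FreeGroup.norm c with hC
  obtain ⟨k, hk4, hkF⟩ : ∃ k : ℕ, 4 ≤ k ∧ 2 * F + C + 1 ≤ k :=
    ⟨max 4 (2 * F + C + 1), le_max_left _ _, le_max_right _ _⟩
  -- upper bound
  have hub : FreeGroup.norm (f ^ k * c * (f ^ k)⁻¹) ≤ k * F + C + k * F := by
    calc FreeGroup.norm (f ^ k * c * (f ^ k)⁻¹)
        ≤ FreeGroup.norm (f ^ k * c) + FreeGroup.norm ((f ^ k)⁻¹) := FreeGroup.norm_mul_le _ _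
    _ ≤ FreeGroup.norm (f ^ k) + FreeGroup.norm c + FreeGroup.norm ((f ^ k)⁻¹) := by
        have := FreeGroup.norm_mul_le (f ^ k) c
        omega
    _ ≤ k * F + C + k * F := by
        have h1 := norm_pow_le f k
        rw [← hF] at h1
        have h2 : FreeGroup.norm ((f ^ k)⁻¹) = FreeGroup.norm (f ^ k) := FreeGroup.norm_inv_eq
        omega
  -- lower bound
  have hrk0 : r ^ k ≠ 0 := pow_ne_zero _ hr0
  have hlb : (r ^ k).natAbs ≤ FreeGroup.norm (c ^ (r ^ k)) :=
    (norm_zpow_facts c hc (r ^ k) hrk0).1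
  have habs : 2 ^ k ≤ (r ^ k).natAbs := by
    rw [Int.natAbs_pow]
    exact Nat.pow_le_pow_left hr k
  have hsq := sq_le_two_pow k hk4
  rw [hit k] at hub
  -- combine: 2 ^ k ≤ 2 k F + C but k * k ≤ 2 ^ k and k ≥ 2F + C + 1
  have hcomb : 2 ^ k ≤ k * F + C + k * F := le_trans (le_trans habs hlb) hub
  have hbig : k * (2 * F + C + 1) ≤ k * k := Nat.mul_le_mul_left k hkF
  have hexp : k * (2 * F + C + 1) = k * F + k * F + k * C + k := by ring
  have hCk : C ≤ k * C := Nat.le_mul_of_pos_left C (by omega)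
  omega

end MaxRoot

section SurfaceWord

/-- The basic block of the surface relator word. -/
def blockW (n : ℕ) (i : Fin n) : List ((Fin n ⊕ Fin n) × Bool) :=
  [(Sum.inl i, false), (Sum.inr i, false), (Sum.inl i, true), (Sum.inr i, true)]

/-- The word of the surface relator. -/
def Wword (n : ℕ) : List ((Fin n ⊕ Fin n) × Bool) := (List.ofFn (blockW n)).flatten

lemma mk_flatten {γ : Type*} (bs : List (List (γ × Bool))) :
    FreeGroup.mk bs.flatten = (bs.map FreeGroup.mk).prod := by
  induction bs with
  | nil => rw [List.flatten_nil, List.map_nil, List.prod_nil, FreeGroup.one_eq_mk]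
  | cons b bs ih => rw [List.flatten_cons, ← FreeGroup.mul_mk, List.map_cons, List.prod_cons, ih]

lemma surfaceRel_eq_mk (n : ℕ) : surfaceRel n = FreeGroup.mk (Wword n) := by
  have hblock : ∀ i : Fin n, commAB (FreeGroup.of (Sum.inl i)) (FreeGroup.of (Sum.inr i)) =
      FreeGroup.mk (blockW n i) := by
    intro i
    show (FreeGroup.mk [(Sum.inl i, true)])⁻¹ * (FreeGroup.mk [(Sum.inr i, true)])⁻¹ *
        FreeGroup.mk [(Sum.inl i, true)] * FreeGroup.mk [(Sum.inr i, true)] = _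
    rw [FreeGroup.inv_mk, FreeGroup.inv_mk, FreeGroup.mul_mk, FreeGroup.mul_mk, FreeGroup.mul_mk]
    simp [FreeGroup.invRev, blockW]
  unfold surfaceRel Wword
  rw [mk_flatten, List.map_ofFn]
  have hfun : (fun i : Fin n => commAB (FreeGroup.of (Sum.inl i)) (FreeGroup.of (Sum.inr i))) =
      (FreeGroup.mk ∘ blockW n) := funext fun i => hblock i
  rw [hfun]

lemma length_Wword (n : ℕ) : (Wword n).length = 4 * n := by
  unfold Wword
  rw [List.length_flatten, List.map_ofFn]
  have h1 : (List.length ∘ blockW n) = fun _ => 4 := funext fun i => rfl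
  rw [h1, List.ofFn_const, List.sum_replicate, smul_eq_mul]
  omega

lemma getElem?_flatten_of_length {γ : Type*} (K : ℕ) (hK : 0 < K) :
    ∀ (Bs : List (List γ)), (∀ b ∈ Bs, b.length = K) → ∀ j : ℕ,
      Bs.flatten[j]? = (Bs[j / K]?).bind (fun b => b[j % K]?) := by
  intro Bs
  induction Bs with
  | nil => intro _ j; simp
  | cons b Bs ih =>
    intro hall j
    have hb : b.length = K := hall b (by simp)
    rw [List.flatten_cons]
    by_cases hj : j < K
    · rw [List.getElem?_append_left (show j < b.length by omega)]
      rw [Nat.div_eq_of_lt hj, Nat.mod_eq_of_lt hj]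
      simp
    · push_neg at hj
      rw [List.getElem?_append_right (show b.length ≤ j by omega)]
      rw [hb, ih (fun x hx => hall x (by simp [hx])) (j - K)]
      rw [Nat.div_eq_sub_div hK hj, Nat.mod_eq_sub_mod hj]
      simp

lemma Wword_getElem (n j : ℕ) (hj : j < 4 * n) :
    ∃ i : Fin n, (i : ℕ) = j / 4 ∧
      (Wword n)[j]? = some (if j % 2 = 0 then ((Sum.inl i : Fin n ⊕ Fin n), decide (2 ≤ j % 4))
        else ((Sum.inr i : Fin n ⊕ Fin n), decide (2 ≤ j % 4))) := by
  have hi : j / 4 < n := by omega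
  refine ⟨⟨j / 4, hi⟩, rfl, ?_⟩
  unfold Wword
  rw [getElem?_flatten_of_length 4 (by norm_num) _ ?hall j]
  case hall =>
    intro b hb
    rw [List.mem_ofFn] at hb
    obtain ⟨i, rfl⟩ := hb
    rfl
  rw [List.getElem?_ofFn, dif_pos hi]
  have h4 : j % 4 = 0 ∨ j % 4 = 1 ∨ j % 4 = 2 ∨ j % 4 = 3 := by omega
  rcases h4 with h | h | h | h <;>
    · have h2 : j % 2 = j % 4 % 2 := by omega
      rw [h] at h2 ⊢
      simp at h2
      simp [blockW, h2]

lemma isRed_Wword (n : ℕ) : IsRed (Wword n) := by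
  rw [IsRed]; show List.IsChain _ _; rw [List.isChain_iff_getElem]
  intro i hlt
  rw [length_Wword] at hlt
  obtain ⟨i1, hi1, h1⟩ := Wword_getElem n i (by omega)
  obtain ⟨i2, hi2, h2⟩ := Wword_getElem n (i + 1) (by omega)
  have e1 : (Wword n).get ⟨i, by rw [length_Wword]; omega⟩ = _ :=
    (Option.some_inj.1 ((List.getElem?_eq_getElem (by rw [length_Wword]; omega)).symm.trans h1))
  have e2 : (Wword n).get ⟨i + 1, by rw [length_Wword]; omega⟩ = _ :=
    (Option.some_inj.1 ((List.getElem?_eq_getElem (by rw [length_Wword]; omega)).symm.trans h2))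
  rw [List.get_eq_getElem] at e1 e2
  show ¬ Cancels _ _
  rw [e1, e2]
  rintro ⟨hfst, -⟩
  rcases Nat.even_or_odd i with he | ho
  · have hi0 : i % 2 = 0 := Nat.even_iff.1 he
    have hi1' : (i + 1) % 2 = 1 := by omega
    rw [if_pos hi0, if_neg (by omega)] at hfst
    exact absurd hfst (by simp)
  · have hi0 : i % 2 = 1 := Nat.odd_iff.1 ho
    have hi1' : (i + 1) % 2 = 0 := by omega
    rw [if_neg (by omega), if_pos hi1'] at hfst
    exact absurd hfst (by simp)

lemma Wword_ne_nil {n : ℕ} (hn : 1 ≤ n) : Wword n ≠ [] := by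
  intro h
  have := length_Wword n
  rw [h] at this
  simp at this
  omega

lemma toWord_surfaceRel (n : ℕ) : (surfaceRel n).toWord = Wword n := by
  rw [surfaceRel_eq_mk, toWord_mk_isRed (isRed_Wword n)]

lemma surfaceRel_ne_one {n : ℕ} (hn : 1 ≤ n) : surfaceRel n ≠ 1 := by
  intro h
  have h1 := toWord_surfaceRel n
  rw [h, FreeGroup.toWord_one] at h1
  exact Wword_ne_nil hn h1.symm

lemma Wword_head_last {n : ℕ} (hn : 1 ≤ n) :
    ∀ a b : (Fin n ⊕ Fin n) × Bool, a ∈ (Wword n).head? → b ∈ (Wword n).getLast? →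
      ¬ Cancels b a := by
  intro a b ha hb
  rw [List.head?_eq_getElem?] at ha
  rw [List.getLast?_eq_getElem?, length_Wword] at hb
  obtain ⟨i1, hi1, h1⟩ := Wword_getElem n 0 (by omega)
  obtain ⟨i2, hi2, h2⟩ := Wword_getElem n (4 * n - 1) (by omega)
  rw [h1, Option.mem_some_iff] at ha
  rw [h2, Option.mem_some_iff] at hb
  rintro ⟨hfst, -⟩
  rw [← ha, ← hb] at hfst
  have hm1 : (0 : ℕ) % 2 = 0 := rfl
  have hm2 : (4 * n - 1) % 2 = 1 := by omega
  rw [if_pos hm1, if_neg (by omega)] at hfst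
  exact absurd hfst (by simp)

/-- The word of a power decomposes with empty conjugating part when the full word is
cyclically reduced. -/
lemma u_eq_nil {γ : Type*} {u F W : List (γ × Bool)}
    (hW : W = u ++ (F ++ FreeGroup.invRev u))
    (hnc : ∀ a b : γ × Bool, a ∈ W.head? → b ∈ W.getLast? → ¬ Cancels b a) : u = [] := by
  cases u with
  | nil => rfl
  | cons p u' =>
    exfalso
    have hhead : W.head? = some p := by rw [hW]; rfl
    have hlast : W.getLast? = some (p.1, !p.2) := by
      rw [hW, invRev_cons]
      rw [List.getLast?_append_of_ne_nil _ (by simp)]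
      rw [List.getLast?_append_of_ne_nil _ (by simp)]
      exact List.getLast?_concat
    exact hnc p (p.1, !p.2) (by rw [hhead]; rfl) (by rw [hlast]; rfl) ⟨rfl, rfl⟩

/-- The surface relator is not a proper power. -/
lemma surfaceRel_pow_aux {n : ℕ} (hn : 1 ≤ n) (x : FreeGroup (Fin n ⊕ Fin n)) (hx : x ≠ 1)
    (k : ℕ) (hk : 2 ≤ k) : x ^ k ≠ surfaceRel n := by
  intro heq
  obtain ⟨u, w, hw, hword⟩ := pow_word x hx
  have h1 : (x ^ k).toWord = u ++ ((List.replicate k w).flatten ++ FreeGroup.invRev u) :=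
    hword k (by omega)
  rw [heq, toWord_surfaceRel] at h1
  have hu : u = [] := u_eq_nil h1 (Wword_head_last hn)
  subst hu
  rw [List.nil_append, show FreeGroup.invRev ([] : List ((Fin n ⊕ Fin n) × Bool)) = [] from rfl,
    List.append_nil] at h1
  -- lengths
  set d := w.length with hd
  have hd1 : 1 ≤ d := by
    cases w with
    | nil => exact absurd rfl hw
    | cons a l => simp [hd]
  have hlen : k * d = 4 * n := by
    have := congrArg List.length h1
    rw [length_Wword, List.length_flatten, List.map_replicate, List.sum_replicate,
      smul_eq_mul] at this
    rw [← hd] at this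
    omega
  have hd4n : d < 4 * n := by nlinarith
  -- W[d]? = W[0]?
  have hget : ∀ j : ℕ, (Wword n)[j]? =
      ((List.replicate k w)[j / d]?).bind (fun b => b[j % d]?) := by
    intro j
    rw [h1]
    exact getElem?_flatten_of_length d (by omega) _
      (fun b hb => by rw [List.eq_of_mem_replicate hb]) j
  have hW0 : (Wword n)[0]? = w[0]? := by
    rw [hget 0, Nat.zero_div, Nat.zero_mod, List.getElem?_replicate, if_pos (by omega)]
    rfl
  have hWd : (Wword n)[d]? = w[0]? := by
    rw [hget d, Nat.div_self (by omega), Nat.mod_self, List.getElem?_replicate,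
      if_pos (by omega)]
    rfl
  have hEq : (Wword n)[d]? = (Wword n)[0]? := by rw [hW0, hWd]
  obtain ⟨i0, hi0, h0⟩ := Wword_getElem n 0 (by omega)
  obtain ⟨id, hid, hdd⟩ := Wword_getElem n d hd4n
  rw [h0, hdd, Option.some_inj] at hEq
  have h4 : d % 4 = 0 ∨ d % 4 = 1 ∨ d % 4 = 2 ∨ d % 4 = 3 := by omega
  rcases h4 with h | h | h | h
  · have hm : d % 2 = 0 := by omega
    rw [if_pos hm, if_pos rfl] at hEq
    have hfst := congrArg Prod.fst hEq
    simp at hfst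
    have : (id : ℕ) = (i0 : ℕ) := by rw [hfst]
    rw [hid, hi0] at this
    omega
  · have hm : d % 2 = 1 := by omega
    rw [if_neg (by omega), if_pos rfl] at hEq
    have hfst := congrArg Prod.fst hEq
    simp at hfst
  · have hm : d % 2 = 0 := by omega
    rw [if_pos hm, if_pos rfl] at hEq
    have hsnd := congrArg Prod.snd hEq
    rw [h] at hsnd
    simp at hsnd
  · have hm : d % 2 = 1 := by omega
    rw [if_neg (by omega), if_pos rfl] at hEq
    have hfst := congrArg Prod.fst hEq
    simp at hfst

lemma surfaceRel_not_proper_power {n : ℕ} (hn : 1 ≤ n) {c : FreeGroup (Fin n ⊕ Fin n)} {v : ℤ}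
    (hc : c ≠ 1) (hv : c ^ v = surfaceRel n) : v = 1 ∨ v = -1 := by
  by_contra hcon
  push_neg at hcon
  obtain ⟨h1, h2⟩ := hcon
  have hv0 : v ≠ 0 := by
    rintro rfl
    rw [zpow_zero] at hv
    exact surfaceRel_ne_one hn hv.symm
  rcases v with q | q
  · have hq : 2 ≤ q := by
      rcases Nat.lt_or_ge q 2 with h | h
      · interval_cases q
        · exact absurd rfl hv0
        · exact absurd rfl h1
      · exact h
    rw [show Int.ofNat q = (q : ℤ) from rfl, zpow_natCast] at hv
    exact surfaceRel_pow_aux hn c hc q hq hv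
  · have hq : 2 ≤ q + 1 := by
      rcases Nat.lt_or_ge (q + 1) 2 with h | h
      · have : q = 0 := by omega
        subst this
        exact absurd rfl h2
      · exact h
    rw [zpow_negSucc] at hv
    exact surfaceRel_pow_aux hn c⁻¹ (by simpa using hc) (q + 1) hq (by rw [inv_pow]; exact hv)

end SurfaceWord

end ClaimAux

/-- **Claim 1 in the proof of Proposition 4.5.** In the free group `F` of rank `2n` with
`γ = [x_1,y_1]⋯[x_n,y_n]` and `C = ⟨γ⟩`: for `f ∉ C` and `m ≠ 0`, the commutator
`[γ^m, fγ^m f⁻¹]` is nontrivial. -/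
theorem commutator_conj_ne_one (p : ℕ) (hp : p.Prime) (n : ℕ) (hn : 1 ≤ n)
    (f : FreeGroup (Fin n ⊕ Fin n)) (hf : f ∉ Subgroup.zpowers (surfaceRel n))
    (m : ℤ) (hm : m ≠ 0) :
    commAB (surfaceRel n ^ m) (f * surfaceRel n ^ m * f⁻¹) ≠ 1 := by
  classical
  set γ := surfaceRel n with hγdef
  intro hone
  have hγ1 : γ ≠ 1 := ClaimAux.surfaceRel_ne_one hn
  set a := γ ^ m with hadef
  have ha1 : a ≠ 1 := ClaimAux.zpow_ne_one γ hγ1 m hm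
  -- the hypothesis says the two conjugates commute
  have hcomm : Commute a (f * a * f⁻¹) := by
    open scoped commutatorElement in
    have h2 : ⁅a⁻¹, (f * a * f⁻¹)⁻¹⁆ = commAB a (f * a * f⁻¹) := by
      rw [commutatorElement_def]
      unfold commAB
      group
    have h3 := commutatorElement_eq_one_iff_commute.1 (h2.trans hone)
    simpa using h3.inv_inv
  obtain ⟨c, hc1, hc2, hmax⟩ := ClaimAux.exists_maxroot ha1
  obtain ⟨i, hi⟩ := Subgroup.mem_zpowers_iff.1 hc2
  have hfa : f * a * f⁻¹ ≠ 1 := by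
    intro h
    apply ha1
    calc a = f⁻¹ * (f * a * f⁻¹) * f := by group
    _ = 1 := by rw [h]; group
  have hfac : f * a * f⁻¹ ∈ Subgroup.zpowers c := hmax _ hcomm.symm
  obtain ⟨j, hj⟩ := Subgroup.mem_zpowers_iff.1 hfac
  have hj0 : j ≠ 0 := by
    rintro rfl
    rw [zpow_zero] at hj
    exact hfa hj.symm
  have h6 : Commute c a := by rw [← hi]; exact (Commute.refl c).zpow_right i
  have h5 : Commute (f * c * f⁻¹) (c ^ j) := by
    rw [hj]
    have h7 := h6.map (MulAut.conj f).toMonoidHom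
    simpa [MulAut.conj_apply] using h7
  have h7 : Commute (f * c * f⁻¹) c := ClaimAux.commute_of_commute_zpow hc1 hj0 h5
  have h8 : Commute (f * c * f⁻¹) a := by rw [← hi]; exact h7.zpow_right i
  have h9 : f * c * f⁻¹ ∈ Subgroup.zpowers c := hmax _ h8
  obtain ⟨r, hr⟩ := Subgroup.mem_zpowers_iff.1 h9
  have hrabs : r.natAbs ≤ 1 := ClaimAux.bs_relation hc1 hr.symm
  have hr0 : r ≠ 0 := by
    rintro rfl
    rw [zpow_zero] at hr
    apply hc1
    calc c = f⁻¹ * (f * c * f⁻¹) * f := by group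
    _ = 1 := by rw [← hr]; group
  have hf1 : f ≠ 1 := by
    rintro rfl
    exact hf (Subgroup.one_mem _)
  have hrval : r = 1 := by
    have hd : r = 1 ∨ r = -1 := by omega
    rcases hd with h | h
    · exact h
    · exfalso
      rw [h, zpow_neg_one] at hr
      -- hr : c⁻¹ = f * c * f⁻¹
      have hcc : f ^ 2 * c * (f ^ 2)⁻¹ = c := by
        have e2 : f * c⁻¹ * f⁻¹ = (f * c * f⁻¹)⁻¹ := by group
        calc f ^ 2 * c * (f ^ 2)⁻¹ = f * (f * c * f⁻¹) * f⁻¹ := by rw [pow_two]; group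
        _ = f * c⁻¹ * f⁻¹ := by rw [← hr]
        _ = (f * c * f⁻¹)⁻¹ := e2
        _ = (c⁻¹)⁻¹ := by rw [← hr]
        _ = c := inv_inv c
      have h22 : f ^ (2:ℤ) = f ^ (2:ℕ) := zpow_natCast f 2
      have hf2ne : f ^ (2:ℤ) ≠ 1 := ClaimAux.zpow_ne_one f hf1 2 (by norm_num)
      have hcf2 : Commute c (f ^ (2:ℤ)) := by
        rw [h22]
        show c * f ^ 2 = f ^ 2 * c
        calc c * f ^ 2 = (f ^ 2 * c * (f ^ 2)⁻¹) * f ^ 2 := by rw [hcc]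
        _ = f ^ 2 * c := by group
      have hcf : Commute c f := ClaimAux.commute_of_commute_zpow hf1 (by norm_num) hcf2
      -- then f * c * f⁻¹ = c, so c⁻¹ = c
      have h10 : f * c * f⁻¹ = c := by
        rw [show f * c = c * f from hcf.eq.symm]
        exact mul_inv_cancel_right c f
      have h11 : c = c⁻¹ := (hr.trans h10).symm
      have h12 : c ^ (2:ℤ) = 1 := by
        rw [show (2:ℤ) = ((2:ℕ) : ℤ) from rfl, zpow_natCast, pow_two]
        nth_rewrite 1 [h11]
        simp
      exact ClaimAux.zpow_ne_one c hc1 2 (by norm_num) h12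
  rw [hrval, zpow_one] at hr
  -- hr : c = f * c * f⁻¹
  have hfc : Commute f c := by
    show f * c = c * f
    calc f * c = (f * c * f⁻¹) * f := by group
    _ = c * f := by rw [← hr]
  have hfa2 : Commute f a := by rw [← hi]; exact hfc.zpow_right i
  have hfz : f ∈ Subgroup.zpowers c := hmax f hfa2
  have hγa : Commute γ a := by rw [hadef]; exact (Commute.refl γ).zpow_right m
  have hγz : γ ∈ Subgroup.zpowers c := hmax γ hγa
  obtain ⟨v, hv⟩ := Subgroup.mem_zpowers_iff.1 hγz
  rcases ClaimAux.surfaceRel_not_proper_power hn hc1 (by rw [hv, hγdef]) with rfl | rfl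
  · rw [zpow_one] at hv
    rw [hv] at hfz
    exact hf hfz
  · have hcinv : c = γ⁻¹ := by rw [← hv]; simp
    rw [hcinv] at hfz
    exact hf (ClaimAux.mem_zpowers_of_mem_zpowers_inv hfz)
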